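/- Let T > 0, a, b, k > 0, and let f : [0,T] → ℝ be a non-negative integrable function satisfying f(t) ≤ a + b·k·∫₀ᵗ f(s)/√(t−s) ds for all 0 ≤ t ≤ T. Then for all 0 ≤ t ≤ T, f(t) ≤ a + 2·a·b·k·√t + π·b²·k²·∫₀ᵗ f(l) dl. -/

import Mathlib

open MeasureTheory Set Real intervalIntegral

lemma inv_sqrt_eq_rpow {y : ℝ} (hy : 0 ≤ y) : 1 / Real.sqrt y = y ^ (-(1/2) : ℝ) := by
  rcases eq_or_lt_of_le hy with hy0 | hy0
  · rw [← hy0]; rw [Real.zero_rpow (by norm_num)]; simp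
  · rw [Real.rpow_neg hy0.le, Real.sqrt_eq_rpow]; norm_num

lemma II_inv_sqrt (c : ℝ) : IntervalIntegrable (fun y : ℝ => 1 / Real.sqrt y) volume 0 c := by
  have h := intervalIntegral.intervalIntegrable_rpow' (a := 0) (b := c) (r := -(1/2)) (by norm_num)
  apply h.congr_ae
  rw [Filter.EventuallyEq, ae_restrict_iff' measurableSet_uIoc]
  filter_upwards with y _
  rcases le_or_gt 0 y with hy | hy
  · exact (inv_sqrt_eq_rpow hy).symm
  · rw [Real.rpow_def_of_neg hy, Real.sqrt_eq_zero_of_nonpos hy.le]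
    have : Real.cos (-(1/2) * π) = 0 := by
      rw [neg_mul, Real.cos_neg]
      rw [show (1/2) * π = π/2 by ring, Real.cos_pi_div_two]
    rw [this]
    simp

lemma int_inv_sqrt {c : ℝ} (hc : 0 ≤ c) :
    ∫ y in (0:ℝ)..c, 1 / Real.sqrt y = 2 * Real.sqrt c := by
  have h : ∫ y in (0:ℝ)..c, y ^ (-(1/2) : ℝ) = 2 * Real.sqrt c := by
    rw [integral_rpow (Or.inl (by norm_num))]
    norm_num
    rw [Real.sqrt_eq_rpow]
    ring
  rw [← h]
  apply intervalIntegral.integral_congr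
  intro y hy
  rw [uIcc_of_le hc] at hy
  exact inv_sqrt_eq_rpow hy.1

-- integral of 1/√(t-s) over 0..t
lemma II_inv_sqrt_sub (t : ℝ) :
    IntervalIntegrable (fun s : ℝ => 1 / Real.sqrt (t - s)) volume 0 t := by
  have h := (II_inv_sqrt t).comp_sub_left t
  simpa using h.symm

lemma int_inv_sqrt_sub {t : ℝ} (ht : 0 ≤ t) :
    ∫ s in (0:ℝ)..t, 1 / Real.sqrt (t - s) = 2 * Real.sqrt t := by
  rw [intervalIntegral.integral_comp_sub_left (fun y => 1 / Real.sqrt y) t]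
  simp only [sub_self, sub_zero]
  simpa [one_div] using int_inv_sqrt ht

lemma II_phi : IntervalIntegrable (fun x : ℝ => 1 / Real.sqrt (1 - x^2)) volume (-1) 1 := by
  have meas : AEStronglyMeasurable (fun x : ℝ => 1 / Real.sqrt (1 - x^2))
      (volume.restrict (Set.uIoc (0:ℝ) 1)) :=
    ((measurable_const.sub (measurable_id.pow_const 2)).sqrt.const_div 1).aestronglyMeasurable
  have h01 : IntervalIntegrable (fun x : ℝ => 1 / Real.sqrt (1 - x^2)) volume 0 1 := by
    have hbase : IntervalIntegrable (fun x : ℝ => 1 / Real.sqrt (1 - x)) volume 0 1 := by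
      have := (II_inv_sqrt 1).comp_sub_left 1
      simpa using this.symm
    refine hbase.mono_fun meas ?_
    rw [uIoc_of_le (by norm_num : (0:ℝ) ≤ 1), Filter.EventuallyLE, ae_restrict_iff' measurableSet_Ioc]
    filter_upwards with x hx
    simp only [Real.norm_eq_abs]
    rcases eq_or_lt_of_le hx.2 with h1 | h1
    · rw [h1]; simp
    · have h2 : 0 < 1 - x := by linarith
      have h3 : 1 - x ≤ 1 - x^2 := by nlinarith [hx.1.le]
      rw [abs_of_nonneg (by positivity), abs_of_nonneg (by positivity)]
      apply one_div_le_one_div_of_le (Real.sqrt_pos.mpr h2)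
      exact Real.sqrt_le_sqrt h3
  have hneg : IntervalIntegrable (fun x : ℝ => 1 / Real.sqrt (1 - x^2)) volume (-1) 0 := by
    have := h01.comp_mul_left (c := -1) enorm_ne_top enorm_ne_top
    have e : (fun x : ℝ => 1 / Real.sqrt (1 - (-1*x)^2)) = fun x : ℝ => 1 / Real.sqrt (1 - x^2) := by
      funext x; ring_nf
    rw [e] at this
    simpa using this.symm
  exact hneg.trans h01

lemma int_phi : ∫ x in (-1:ℝ)..1, 1 / Real.sqrt (1 - x^2) = π := by
  have h := intervalIntegral.integral_eq_sub_of_hasDerivAt_of_le (by norm_num : (-1:ℝ) ≤ 1)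
    (Real.continuous_arcsin.continuousOn)
    (fun x hx => Real.hasDerivAt_arcsin (ne_of_gt hx.1) (ne_of_lt hx.2))
    II_phi
  rw [h, Real.arcsin_one, Real.arcsin_neg_one]
  ring

lemma sqrt_mul_sqrt_one_sub (x : ℝ) :
    Real.sqrt (1 - x) * Real.sqrt (1 + x) = Real.sqrt (1 - x^2) := by
  rcases le_or_gt 0 (1 - x) with h | h
  · rw [← Real.sqrt_mul h]
    ring_nf
  · rw [Real.sqrt_eq_zero_of_nonpos h.le,
      Real.sqrt_eq_zero_of_nonpos (by nlinarith : (1:ℝ) - x^2 ≤ 0)]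
    ring

lemma beta_aux {l t : ℝ} (hlt : l < t) :
    (fun x : ℝ => 1 / (Real.sqrt (t - (((t-l)/2)*x + (l+t)/2))
        * Real.sqrt ((((t-l)/2)*x + (l+t)/2) - l)))
      = fun x : ℝ => (2/(t-l)) * (1 / Real.sqrt (1 - x^2)) := by
  set r := (t-l)/2 with hr
  have hr0 : 0 < r := by simp [hr]; linarith
  funext x
  have e1 : t - (r*x + (l+t)/2) = r * (1 - x) := by simp [hr]; ring
  have e2 : (r*x + (l+t)/2) - l = r * (1 + x) := by simp [hr]; ring
  rw [e1, e2, Real.sqrt_mul hr0.le, Real.sqrt_mul hr0.le]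
  have : Real.sqrt r * Real.sqrt (1-x) * (Real.sqrt r * Real.sqrt (1+x))
      = r * (Real.sqrt (1-x) * Real.sqrt (1+x)) := by
    rw [show Real.sqrt r * Real.sqrt (1-x) * (Real.sqrt r * Real.sqrt (1+x))
      = (Real.sqrt r * Real.sqrt r) * (Real.sqrt (1-x) * Real.sqrt (1+x)) by ring,
      Real.mul_self_sqrt hr0.le]
  rw [this, sqrt_mul_sqrt_one_sub]
  rw [one_div, mul_inv, ← one_div, ← one_div, hr]
  rw [show (1:ℝ) / ((t-l)/2) = 2/(t-l) by field_simp]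

lemma II_beta {l t : ℝ} (hlt : l < t) :
    IntervalIntegrable (fun s : ℝ => 1 / (Real.sqrt (t - s) * Real.sqrt (s - l))) volume l t := by
  set r := (t-l)/2 with hr
  have hr0 : 0 < r := by rw [hr]; linarith
  have hG : IntervalIntegrable
      (fun x : ℝ => 1 / (Real.sqrt (t - (r*x + (l+t)/2)) * Real.sqrt ((r*x + (l+t)/2) - l)))
      volume (-1) 1 := by
    rw [beta_aux hlt]
    exact (II_phi.const_mul _)
  have H := (hG.comp_mul_left (c := 1/r) enorm_ne_top enorm_ne_top).comp_add_right (-((l+t)/2))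
  have hb1 : (-1:ℝ)/(1/r) - (-((l+t)/2)) = l := by
    field_simp
    rw [hr]; ring
  have hb2 : (1:ℝ)/(1/r) - (-((l+t)/2)) = t := by
    field_simp
    rw [hr]; ring
  rw [hb1, hb2] at H
  convert H using 1
  funext s
  have e : r * (1/r * (s + -((l+t)/2))) + (l+t)/2 = s := by
    field_simp
    ring
  rw [e]

lemma int_beta {l t : ℝ} (hlt : l < t) :
    ∫ s in l..t, 1 / (Real.sqrt (t - s) * Real.sqrt (s - l)) = π := by
  have hr0 : (0:ℝ) < (t-l)/2 := by linarith
  have key := intervalIntegral.integral_comp_mul_add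
    (a := -1) (b := 1)
    (fun s : ℝ => 1 / (Real.sqrt (t - s) * Real.sqrt (s - l))) hr0.ne' ((l+t)/2)
  have hb1 : (t-l)/2 * (-1) + (l+t)/2 = l := by ring
  have hb2 : (t-l)/2 * 1 + (l+t)/2 = t := by ring
  rw [hb1, hb2] at key
  have lhs_eq : (∫ x in (-1:ℝ)..1,
      (fun s : ℝ => 1 / (Real.sqrt (t - s) * Real.sqrt (s - l))) ((t-l)/2 * x + (l+t)/2))
      = (2/(t-l)) * π := by
    calc (∫ x in (-1:ℝ)..1, (1 / (Real.sqrt (t - ((t-l)/2 * x + (l+t)/2))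
          * Real.sqrt (((t-l)/2 * x + (l+t)/2) - l))))
        = ∫ x in (-1:ℝ)..1, (2/(t-l)) * (1 / Real.sqrt (1 - x^2)) := by
          exact intervalIntegral.integral_congr (fun x _ => congrFun (beta_aux hlt) x)
      _ = (2/(t-l)) * π := by
          rw [intervalIntegral.integral_const_mul, int_phi]
  rw [lhs_eq, smul_eq_mul] at key
  have hne : ((t-l)/2 : ℝ) ≠ 0 := hr0.ne'
  have h2 : ∫ s in l..t, 1 / (Real.sqrt (t - s) * Real.sqrt (s - l))
      = ((t-l)/2) * ((2/(t-l)) * π) := by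
    rw [key, ← mul_assoc, mul_inv_cancel₀ hne, one_mul]
  have hne2 : (t - l : ℝ) ≠ 0 := by linarith
  rw [h2, ← mul_assoc, show (t-l)/2 * (2/(t-l)) = 1 by field_simp, one_mul]

open ENNReal in
lemma lint_inv_sqrt_sub {t : ℝ} (ht : 0 ≤ t) :
    ∫⁻ s in Set.Ioc 0 t, ENNReal.ofReal (1 / Real.sqrt (t - s))
      = ENNReal.ofReal (2 * Real.sqrt t) := by
  have hi : IntegrableOn (fun s : ℝ => 1 / Real.sqrt (t - s)) (Set.Ioc 0 t) volume := by
    have := II_inv_sqrt_sub t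
    rwa [intervalIntegrable_iff, uIoc_of_le ht] at this
  rw [← ofReal_integral_eq_lintegral_ofReal hi (ae_of_all _ fun s => by positivity)]
  rw [← intervalIntegral.integral_of_le ht, int_inv_sqrt_sub ht]

open ENNReal in
lemma lint_beta {l t : ℝ} (hl0 : 0 ≤ l) (hlt : l < t) :
    ∫⁻ s in Set.Ioc 0 t,
        ENNReal.ofReal (1 / Real.sqrt (s - l)) * ENNReal.ofReal (1 / Real.sqrt (t - s))
      = ENNReal.ofReal π := by
  have hsplit : Set.Ioc (0:ℝ) l ∪ Set.Ioc l t = Set.Ioc 0 t :=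
    Set.Ioc_union_Ioc_eq_Ioc hl0 hlt.le
  rw [← hsplit, lintegral_union measurableSet_Ioc (Set.Ioc_disjoint_Ioc_of_le le_rfl)]
  have h1 : ∫⁻ s in Set.Ioc (0:ℝ) l,
      ENNReal.ofReal (1 / Real.sqrt (s - l)) * ENNReal.ofReal (1 / Real.sqrt (t - s)) = 0 := by
    have : ∀ s ∈ Set.Ioc (0:ℝ) l,
        ENNReal.ofReal (1 / Real.sqrt (s - l)) * ENNReal.ofReal (1 / Real.sqrt (t - s))
          = (0:ℝ≥0∞) := by
      intro s hs
      rw [Real.sqrt_eq_zero_of_nonpos (by linarith [hs.2] : s - l ≤ 0)]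
      simp
    rw [setLIntegral_congr_fun measurableSet_Ioc this, lintegral_zero]
  have h2 : ∫⁻ s in Set.Ioc l t,
      ENNReal.ofReal (1 / Real.sqrt (s - l)) * ENNReal.ofReal (1 / Real.sqrt (t - s))
      = ENNReal.ofReal π := by
    have he : ∀ s : ℝ, ENNReal.ofReal (1 / Real.sqrt (s - l)) * ENNReal.ofReal (1 / Real.sqrt (t - s))
        = ENNReal.ofReal (1 / (Real.sqrt (t - s) * Real.sqrt (s - l))) := by
      intro s
      rw [← ENNReal.ofReal_mul (by positivity)]
      congr 1
      rw [div_mul_div_comm, one_mul, mul_comm]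
    simp_rw [he]
    have hi : IntegrableOn (fun s : ℝ => 1 / (Real.sqrt (t - s) * Real.sqrt (s - l)))
        (Set.Ioc l t) volume := by
      have := II_beta hlt
      rwa [intervalIntegrable_iff, uIoc_of_le hlt.le] at this
    rw [← ofReal_integral_eq_lintegral_ofReal hi (ae_of_all _ fun s => by positivity)]
    rw [← intervalIntegral.integral_of_le hlt.le, int_beta hlt]
  rw [h1, h2, zero_add]
open Set Real MeasureTheory intervalIntegral ENNReal in
theorem stmt_3 (T a b k : ℝ) (hT : 0 < T) (ha : 0 < a) (hb : 0 < b) (hk : 0 < k)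
    (f : ℝ → ℝ)
    (hint : IntegrableOn f (Set.Icc 0 T) volume)
    (hnonneg : ∀ t ∈ Set.Icc (0:ℝ) T, 0 ≤ f t)
    (hineq : ∀ t ∈ Set.Icc (0:ℝ) T,
      f t ≤ a + b * k * ∫ s in (0:ℝ)..t, f s / Real.sqrt (t - s)) :
    ∀ t ∈ Set.Icc (0:ℝ) T,
      f t ≤ a + 2 * a * b * k * Real.sqrt t
        + Real.pi * b ^ 2 * k ^ 2 * ∫ l in (0:ℝ)..t, f l := by
  intro t ht
  obtain ⟨ht0, htT⟩ := ht
  rcases eq_or_lt_of_le ht0 with rfl | ht0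
  · have := hineq 0 ⟨le_refl 0, hT.le⟩
    simp only [intervalIntegral.integral_same, mul_zero, add_zero] at this ⊢
    simpa [Real.sqrt_zero] using this
  -- measurable nonneg representative g
  set g : ℝ → ℝ := fun x => max (hint.1.mk f x) 0 with hgdef
  have hgmeas : Measurable g :=
    (hint.1.stronglyMeasurable_mk.measurable).max measurable_const
  have hg0 : ∀ x, 0 ≤ g x := fun x => le_max_right _ _
  have hfg : ∀ᵐ x ∂(volume.restrict (Set.Icc 0 T)), f x = g x := by
    filter_upwards [hint.1.ae_eq_mk, ae_restrict_mem measurableSet_Icc] with x h1 h2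
    rw [hgdef]
    simp only [← h1]
    rw [max_eq_left (hnonneg x h2)]
  have hfg' : ∀ᵐ x ∂volume, x ∈ Set.Icc 0 T → f x = g x :=
    (ae_restrict_iff' measurableSet_Icc).mp hfg
  -- inner integral rewriting
  have hJ : ∀ s, 0 ≤ s → s ≤ T →
      (∫ l in (0:ℝ)..s, f l / Real.sqrt (s - l))
        = ∫ l in (0:ℝ)..s, g l * (1 / Real.sqrt (s - l)) := by
    intro s hs0 hsT
    apply intervalIntegral.integral_congr_ae
    filter_upwards [hfg'] with x hx hxI
    rw [uIoc_of_le hs0] at hxI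
    rw [hx ⟨hxI.1.le, hxI.2.trans hsT⟩, div_eq_mul_one_div]
  -- notation
  set W : ℝ → ℝ≥0∞ := fun s => ENNReal.ofReal (1 / Real.sqrt (t - s)) with hWdef
  have hWmeas : Measurable W :=
    (measurable_const.div
      (Real.continuous_sqrt.measurable.comp (measurable_const.sub measurable_id))).ennreal_ofReal
  set Jl : ℝ → ℝ≥0∞ :=
    fun s => ∫⁻ l in Set.Ioc 0 s, ENNReal.ofReal (g l * (1 / Real.sqrt (s - l))) with hJldef
  set I : ℝ := ∫ s in (0:ℝ)..t, f s / Real.sqrt (t - s) with hIdef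
  have hft : f t ≤ a + b * k * I := hineq t ⟨ht0.le, htT⟩
  have hI0 : 0 ≤ I :=
    intervalIntegral.integral_nonneg ht0.le
      (fun x hx => div_nonneg (hnonneg x ⟨hx.1, hx.2.trans htT⟩) (Real.sqrt_nonneg _))
  -- Step B
  have stepB : ENNReal.ofReal I
      ≤ ∫⁻ s in Set.Ioc 0 t, ENNReal.ofReal (f s / Real.sqrt (t - s)) := by
    by_cases hint1 : IntegrableOn (fun s => f s / Real.sqrt (t - s)) (Set.Ioc 0 t) volume
    · rw [hIdef, intervalIntegral.integral_of_le ht0.le,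
        ofReal_integral_eq_lintegral_ofReal hint1
          ((ae_restrict_iff' measurableSet_Ioc).mpr (ae_of_all _ fun s hs =>
            div_nonneg (hnonneg s ⟨hs.1.le, hs.2.trans htT⟩) (Real.sqrt_nonneg _)))]
    · have : I = 0 := intervalIntegral.integral_undef
        (by rwa [intervalIntegrable_iff, uIoc_of_le ht0.le])
      simp [this]
  -- Step C
  have stepC : (∫⁻ s in Set.Ioc 0 t, ENNReal.ofReal (f s / Real.sqrt (t - s)))
      ≤ ∫⁻ s in Set.Ioc 0 t,
          (ENNReal.ofReal a + ENNReal.ofReal (b*k) * Jl s) * W s := by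
    apply lintegral_mono_ae
    filter_upwards [ae_restrict_mem measurableSet_Ioc] with s hs
    have hsT : s ≤ T := hs.2.trans htT
    have hw0 : (0:ℝ) ≤ 1 / Real.sqrt (t - s) := by positivity
    have hfs : f s ≤ a + b*k*(∫ l in (0:ℝ)..s, g l * (1 / Real.sqrt (s - l))) := by
      have h := hineq s ⟨hs.1.le, hsT⟩
      rwa [hJ s hs.1.le hsT] at h
    set Jg : ℝ := ∫ l in (0:ℝ)..s, g l * (1 / Real.sqrt (s - l)) with hJgdef
    have hJg0 : 0 ≤ Jg :=
      intervalIntegral.integral_nonneg hs.1.le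
        (fun x _ => mul_nonneg (hg0 x) (by positivity))
    have hofJg : ENNReal.ofReal Jg ≤ Jl s := by
      by_cases hgi : IntegrableOn (fun l => g l * (1 / Real.sqrt (s - l))) (Set.Ioc 0 s) volume
      · rw [hJgdef, intervalIntegral.integral_of_le hs.1.le,
          ofReal_integral_eq_lintegral_ofReal hgi
            (ae_of_all _ fun l => mul_nonneg (hg0 l) (by positivity))]
      · have h0 : Jg = 0 := intervalIntegral.integral_undef
          (by rwa [intervalIntegrable_iff, uIoc_of_le hs.1.le])
        simp [h0]
    calc ENNReal.ofReal (f s / Real.sqrt (t - s))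
        ≤ ENNReal.ofReal ((a + b*k*Jg) * (1 / Real.sqrt (t - s))) := by
          apply ENNReal.ofReal_le_ofReal
          rw [div_eq_mul_one_div]
          exact mul_le_mul_of_nonneg_right hfs hw0
      _ = (ENNReal.ofReal a + ENNReal.ofReal (b*k) * ENNReal.ofReal Jg) * W s := by
          rw [ENNReal.ofReal_mul (by positivity : (0:ℝ) ≤ a + b*k*Jg),
            ENNReal.ofReal_add ha.le (by positivity),
            ENNReal.ofReal_mul (by positivity : (0:ℝ) ≤ b*k)]
      _ ≤ (ENNReal.ofReal a + ENNReal.ofReal (b*k) * Jl s) * W s := by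
          gcongr
  -- Step D : split the integral
  have stepD : (∫⁻ s in Set.Ioc 0 t,
        (ENNReal.ofReal a + ENNReal.ofReal (b*k) * Jl s) * W s)
      = ENNReal.ofReal a * ENNReal.ofReal (2 * Real.sqrt t)
        + ENNReal.ofReal (b*k) * ∫⁻ s in Set.Ioc 0 t, Jl s * W s := by
    have e : ∀ s, (ENNReal.ofReal a + ENNReal.ofReal (b*k) * Jl s) * W s
        = ENNReal.ofReal a * W s + ENNReal.ofReal (b*k) * (Jl s * W s) := by
      intro s; rw [add_mul, mul_assoc]
    simp_rw [e]
    rw [lintegral_add_left (measurable_const.fun_mul hWmeas),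
      lintegral_const_mul' _ _ ENNReal.ofReal_ne_top,
      lintegral_const_mul' _ _ ENNReal.ofReal_ne_top,
      hWdef, lint_inv_sqrt_sub ht0.le]
  -- Step E : Tonelli
  set Kf : ℝ → ℝ → ℝ≥0∞ := fun s l =>
    ENNReal.ofReal (g l) * ENNReal.ofReal (1 / Real.sqrt (s - l))
      * ENNReal.ofReal (1 / Real.sqrt (t - s)) with hKfdef
  have hKmeas : Measurable (fun p : ℝ × ℝ => Kf p.1 p.2) := by
    apply Measurable.fun_mul
    apply Measurable.fun_mul
    · exact ((hgmeas.comp measurable_snd)).ennreal_ofReal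
    · exact (measurable_const.div
        (Real.continuous_sqrt.measurable.comp (measurable_fst.sub measurable_snd))).ennreal_ofReal
    · exact (measurable_const.div
        (Real.continuous_sqrt.measurable.comp (measurable_const.sub measurable_fst))).ennreal_ofReal
  have haet : ∀ᵐ l ∂(volume.restrict (Set.Ioc (0:ℝ) t)), l ≠ t := by
    refine ae_iff.mpr ?_
    have h0 : volume.restrict (Set.Ioc (0:ℝ) t) {t} = 0 := by
      rw [Measure.restrict_apply (measurableSet_singleton t)]
      exact measure_mono_null Set.inter_subset_left (measure_singleton t)
    convert h0 using 2
    ext x; simp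
  have stepE : (∫⁻ s in Set.Ioc 0 t, Jl s * W s)
      = ENNReal.ofReal π * ENNReal.ofReal (∫ l in Set.Ioc (0:ℝ) t, g l) := by
    have e1 : (∫⁻ s in Set.Ioc 0 t, Jl s * W s)
        = ∫⁻ s in Set.Ioc 0 t, ∫⁻ l in Set.Ioc 0 t, Kf s l := by
      apply lintegral_congr_ae
      filter_upwards [ae_restrict_mem measurableSet_Ioc] with s hs
      have h1 : Jl s = ∫⁻ l in Set.Ioc 0 s,
          ENNReal.ofReal (g l) * ENNReal.ofReal (1 / Real.sqrt (s - l)) := by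
        rw [hJldef]
        exact lintegral_congr fun l => by rw [ENNReal.ofReal_mul (hg0 l)]
      have h2 : (∫⁻ l in Set.Ioc 0 s,
            ENNReal.ofReal (g l) * ENNReal.ofReal (1 / Real.sqrt (s - l)))
          = ∫⁻ l in Set.Ioc 0 t,
            ENNReal.ofReal (g l) * ENNReal.ofReal (1 / Real.sqrt (s - l)) := by
        rw [← Set.Ioc_union_Ioc_eq_Ioc hs.1.le hs.2,
          lintegral_union measurableSet_Ioc (Set.Ioc_disjoint_Ioc_of_le le_rfl)]
        have hz : (∫⁻ l in Set.Ioc s t,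
            ENNReal.ofReal (g l) * ENNReal.ofReal (1 / Real.sqrt (s - l))) = 0 := by
          have hzz : ∀ l ∈ Set.Ioc s t,
              ENNReal.ofReal (g l) * ENNReal.ofReal (1 / Real.sqrt (s - l)) = 0 := by
            intro l hl
            rw [Real.sqrt_eq_zero_of_nonpos (by linarith [hl.1] : s - l ≤ 0)]
            simp
          rw [setLIntegral_congr_fun measurableSet_Ioc hzz, lintegral_zero]
        rw [hz, add_zero]
      rw [h1, h2, lintegral_mul_const' _ _ ENNReal.ofReal_ne_top]
    rw [e1, lintegral_lintegral_swap (hKmeas.aemeasurable)]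
    have e2 : (∫⁻ l in Set.Ioc 0 t, ∫⁻ s in Set.Ioc 0 t, Kf s l)
        = ∫⁻ l in Set.Ioc 0 t, ENNReal.ofReal (g l) * ENNReal.ofReal π := by
      apply lintegral_congr_ae
      filter_upwards [ae_restrict_mem measurableSet_Ioc, haet] with l hl hlt'
      have hllt : l < t := lt_of_le_of_ne hl.2 hlt'
      have : (∫⁻ s in Set.Ioc 0 t, Kf s l)
          = ENNReal.ofReal (g l) * ∫⁻ s in Set.Ioc 0 t,
              ENNReal.ofReal (1 / Real.sqrt (s - l)) * ENNReal.ofReal (1 / Real.sqrt (t - s)) := by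
        simp_rw [hKfdef, mul_assoc]
        rw [lintegral_const_mul' _ _ ENNReal.ofReal_ne_top]
      rw [this, lint_beta hl.1.le hllt]
    rw [e2]
    simp_rw [mul_comm]
    rw [lintegral_const_mul' _ _ ENNReal.ofReal_ne_top]
    have hgint : IntegrableOn g (Set.Ioc 0 t) volume := by
      apply (hint.mono_set (Set.Ioc_subset_Icc_self.trans (Set.Icc_subset_Icc_right htT))).congr
      exact ae_restrict_of_ae_restrict_of_subset
        ((Set.Ioc_subset_Icc_self).trans (Set.Icc_subset_Icc_right htT)) hfg
    rw [← ofReal_integral_eq_lintegral_ofReal hgint (ae_of_all _ hg0)]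
  -- combine
  set G : ℝ := ∫ l in Set.Ioc (0:ℝ) t, g l with hGdef
  have hG0 : 0 ≤ G := setIntegral_nonneg measurableSet_Ioc fun l _ => hg0 l
  have hIG : ∫ l in (0:ℝ)..t, f l = G := by
    rw [intervalIntegral.integral_of_le ht0.le]
    apply MeasureTheory.integral_congr_ae
    exact ae_restrict_of_ae_restrict_of_subset
      ((Set.Ioc_subset_Icc_self).trans (Set.Icc_subset_Icc_right htT)) hfg
  have hcomb : ENNReal.ofReal I ≤ ENNReal.ofReal (a * (2 * Real.sqrt t) + b*k*(π*G)) := by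
    calc ENNReal.ofReal I
        ≤ ENNReal.ofReal a * ENNReal.ofReal (2 * Real.sqrt t)
          + ENNReal.ofReal (b*k) * (ENNReal.ofReal π * ENNReal.ofReal G) := by
          rw [← stepE, ← stepD]
          exact le_trans stepB stepC
      _ = ENNReal.ofReal (a * (2 * Real.sqrt t) + b*k*(π*G)) := by
          rw [← ENNReal.ofReal_mul Real.pi_nonneg, ← ENNReal.ofReal_mul (by positivity : (0:ℝ) ≤ b*k),
            ← ENNReal.ofReal_mul ha.le,
            ← ENNReal.ofReal_add (by positivity) (by positivity)]
  have hIle : I ≤ a * (2 * Real.sqrt t) + b*k*(π*G) := by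
    have hX : (0:ℝ) ≤ a * (2 * Real.sqrt t) + b*k*(π*G) := by positivity
    exact (ENNReal.ofReal_le_ofReal_iff hX).mp hcomb
  rw [hIG]
  have hbk : (0:ℝ) ≤ b * k := by positivity
  calc f t ≤ a + b*k*I := hft
    _ ≤ a + b*k*(a * (2 * Real.sqrt t) + b*k*(π*G)) := by
        have := mul_le_mul_of_nonneg_left hIle hbk
        linarith
    _ = a + 2 * a * b * k * Real.sqrt t + π * b ^ 2 * k ^ 2 * G := by ring
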